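/- Let α > 0, ξ ∈ ℝ, and let v : [0,1] → ℂ be a C² function with v(0) = 0 and v'(1) = (1 − α) v(1), satisfying iξ Ū(r) v − (L − ξ²) v = F on (0,1), where Ū ≥ 0 and L g = g'' + g'/r − g/r². Then the real-part energy identity holds: ∫₀¹ |(rv)'|² (1/r) dr + (α − 2)|v(1)|² + ξ² ∫₀¹ |v|² r dr = Re ∫₀¹ F conj(v) r dr, and the imaginary-part identity: ξ ∫₀¹ Ū(r)|v|² r dr = Im ∫₀¹ F conj(v) r dr. -/

import Mathlib

open MeasureTheory

/-- Energy identities for the swirl equation: if `v` is C² with `v(0) = 0`,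
`v'(1) = (1−α) v(1)` and `iξ Ū v − (L − ξ²)v = F` on `(0,1)` with `Ū ≥ 0`, then
`∫₀¹ |(rv)'|²/r dr + (α−2)|v(1)|² + ξ² ∫₀¹ |v|² r dr = Re ∫₀¹ F conj(v) r dr`
and `ξ ∫₀¹ Ū |v|² r dr = Im ∫₀¹ F conj(v) r dr`. -/
theorem stmt16 (α ξ : ℝ) (hα : 0 < α) (U : ℝ → ℝ) (hU : ∀ r : ℝ, 0 ≤ U r)
    (v F : ℝ → ℂ) (hv : ContDiff ℝ 2 v) (hF : Continuous F)
    (hv0 : v 0 = 0) (hv1 : deriv v 1 = (1 - (α : ℂ)) * v 1)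
    (heq : ∀ r ∈ Set.Ioo (0:ℝ) 1,
      Complex.I * (ξ : ℂ) * ((U r : ℝ) : ℂ) * v r
          - (deriv (deriv v) r + deriv v r / (r : ℂ) - v r / (r : ℂ) ^ 2
              - (ξ : ℂ) ^ 2 * v r) = F r) :
    ((∫ r in (0:ℝ)..1, ‖deriv (fun s : ℝ => (s : ℂ) * v s) r‖ ^ 2 / r)
        + (α - 2) * ‖v 1‖ ^ 2 + ξ ^ 2 * ∫ r in (0:ℝ)..1, ‖v r‖ ^ 2 * r
      = (∫ r in (0:ℝ)..1, F r * (starRingEnd ℂ) (v r) * (r : ℂ)).re)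
    ∧ ξ * ∫ r in (0:ℝ)..1, U r * ‖v r‖ ^ 2 * r
        = (∫ r in (0:ℝ)..1, F r * (starRingEnd ℂ) (v r) * (r : ℂ)).im := by
  -- regularity
  have hv2 : ContDiff ℝ ((1:ℕ∞)+1) v := by exact_mod_cast hv
  have hdv : Differentiable ℝ v := hv.differentiable two_ne_zero
  have hv' : ContDiff ℝ 1 (deriv v) := (contDiff_succ_iff_deriv.mp hv2).2.2
  have hddv : Differentiable ℝ (deriv v) := hv'.differentiable one_ne_zero
  have hcv : Continuous v := hdv.continuous
  have hcdv : Continuous (deriv v) := hddv.continuous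
  have hcddv : Continuous (deriv (deriv v)) := hv'.continuous_deriv le_rfl
  have hD1 : ∀ r, HasDerivAt v (deriv v r) r := fun r => (hdv r).hasDerivAt
  have hD2 : ∀ r, HasDerivAt (deriv v) (deriv (deriv v) r) r := fun r => (hddv r).hasDerivAt
  have hDr : ∀ r : ℝ, HasDerivAt (fun s : ℝ => (s:ℂ)) 1 r := fun r => by
    simpa using (hasDerivAt_id r).ofReal_comp
  have hw : ∀ r : ℝ, deriv (fun s : ℝ => (s:ℂ) * v s) r = v r + (r:ℂ) * deriv v r := by
    intro r
    rw [show (fun s : ℝ => (s:ℂ) * v s) = (fun s : ℝ => (s:ℂ)) * v from rfl, ((hDr r).mul (hD1 r)).deriv]; ring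
  -- the regularized quotient g = v r / r
  set g : ℝ → ℂ := fun r => if r = 0 then deriv v 0 else v r / (r:ℂ) with hgdef
  have hgne : ∀ r : ℝ, r ≠ 0 → g r = v r / (r:ℂ) := fun r hr => if_neg hr
  have hgcont : Continuous g := by
    rw [continuous_iff_continuousAt]
    intro x
    rcases eq_or_ne x 0 with rfl | hx
    · have hs : Filter.Tendsto (slope v 0) (nhdsWithin 0 {(0:ℝ)}ᶜ) (nhds (deriv v 0)) :=
        hasDerivAt_iff_tendsto_slope.mp (hD1 0)
      have hgs : Filter.Tendsto g (nhdsWithin 0 {(0:ℝ)}ᶜ) (nhds (deriv v 0)) := by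
        refine hs.congr' ?_
        filter_upwards [self_mem_nhdsWithin] with s hs0
        rw [slope_def_module, hgne s hs0, hv0, sub_zero, sub_zero, Complex.real_smul,
          Complex.ofReal_inv]
        ring
      have hpure : Filter.Tendsto g (pure (0:ℝ)) (nhds (deriv v 0)) := by
        have : g 0 = deriv v 0 := if_pos rfl
        simpa [this] using tendsto_pure_nhds g 0
      have : Filter.Tendsto g (nhds 0) (nhds (deriv v 0)) := by
        rw [← nhdsNE_sup_pure]
        exact hgs.sup hpure
      have hg0 : g 0 = deriv v 0 := if_pos rfl
      simpa [ContinuousAt, hg0] using this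
    · have hev : ∀ᶠ s in nhds x, g s = v s / (s:ℂ) := by
        filter_upwards [isOpen_compl_singleton.mem_nhds (by simpa using hx : x ∈ ({(0:ℝ)}ᶜ : Set ℝ))] with s hs
        exact hgne s hs
      have hca : ContinuousAt (fun s : ℝ => v s / (s:ℂ)) x :=
        (hcv.continuousAt).div (Complex.continuous_ofReal.continuousAt)
          (by simpa [Complex.ofReal_eq_zero] using hx)
      exact hca.congr (by filter_upwards [hev] with s hs using hs.symm)
  -- pieces
  set Cc : ℝ → ℂ := fun r => F r * star (v r) * (r:ℂ) with hCcdef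
  set Bre : ℝ → ℝ := fun r => ‖v r‖ ^ 2 * r with hBredef
  set a : ℝ → ℝ := fun r => r * ‖g r + deriv v r‖ ^ 2 with hadef
  set Q : ℝ → ℂ := fun r => Cc r + deriv (deriv v) r * star (v r) * (r:ℂ)
      + deriv v r * star (v r) - ((r * ‖g r‖ ^ 2 : ℝ) : ℂ)
      - (ξ:ℂ) ^ 2 * ((Bre r : ℝ) : ℂ) with hQdef
  set G : ℝ → ℂ := fun r => v r * star (v r) + (r:ℂ) * deriv v r * star (v r) with hGdef
  set Gd : ℝ → ℂ := fun r =>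
      (deriv v r * star (v r) + v r * star (deriv v r))
        + ((1 * deriv v r + (r:ℂ) * deriv (deriv v) r) * star (v r)
            + (r:ℂ) * deriv v r * star (deriv v r)) with hGddef
  have hstarv : Continuous (fun r => star (v r)) := continuous_star.comp hcv
  have hstardv : Continuous (fun r => star (deriv v r)) := continuous_star.comp hcdv
  have hCccont : Continuous Cc := by
    rw [hCcdef]; exact (hF.mul hstarv).mul Complex.continuous_ofReal
  have hBrecont : Continuous Bre := by
    rw [hBredef]; exact ((hcv.norm.pow 2)).mul continuous_id
  have hacont : Continuous a := by
    rw [hadef]; exact continuous_id.mul (((hgcont.add hcdv).norm).pow 2)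
  have hQcont : Continuous Q := by
    rw [hQdef]
    refine ((((hCccont.add ((hcddv.mul hstarv).mul Complex.continuous_ofReal)).add
      (hcdv.mul hstarv)).sub (Complex.continuous_ofReal.comp
        (continuous_id.mul ((hgcont.norm).pow 2)))).sub
      (continuous_const.mul (Complex.continuous_ofReal.comp hBrecont)))
  have hGdcont : Continuous Gd := by
    rw [hGddef]
    refine ((hcdv.mul hstarv).add (hcv.mul hstardv)).add
      ((((continuous_const.mul hcdv).add (Complex.continuous_ofReal.mul hcddv)).mul hstarv).add
        ((Complex.continuous_ofReal.mul hcdv).mul hstardv))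
  have hGderiv : ∀ r, HasDerivAt G (Gd r) r := by
    intro r
    exact ((hD1 r).mul (hD1 r).star).add ((((hDr r).mul (hD2 r)).mul ((hD1 r).star)))
  -- FTC
  have hFTC : (∫ r in (0:ℝ)..1, Gd r) = G 1 - G 0 :=
    intervalIntegral.integral_eq_sub_of_hasDerivAt (fun r _ => hGderiv r)
      (hGdcont.intervalIntegrable 0 1)
  have hG0 : G 0 = 0 := by simp [hGdef, hv0]
  have hvc : v 1 * star (v 1) = ((‖v 1‖ ^ 2 : ℝ) : ℂ) := by
    rw [← starRingEnd_apply, Complex.mul_conj']; push_cast; ring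
  have hG1 : G 1 = ((2 - α) * ‖v 1‖ ^ 2 : ℝ) := by
    simp only [hGdef, hv1, Complex.ofReal_one, one_mul]
    calc v 1 * star (v 1) + (1 - (α:ℂ)) * v 1 * star (v 1)
        = (2 - (α:ℂ)) * (v 1 * star (v 1)) := by ring
      _ = ((2 - α) * ‖v 1‖ ^ 2 : ℝ) := by rw [hvc]; push_cast; ring
  have hstar_r : ∀ r : ℝ, star ((r:ℝ):ℂ) = ((r:ℝ):ℂ) := fun r => by
    rw [← starRingEnd_apply, Complex.conj_ofReal]
  have e3 : ∀ r : ℝ, ((Bre r : ℝ):ℂ) = v r * star (v r) * (r:ℂ) := by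
    intro r
    simp only [hBredef]
    push_cast
    rw [← Complex.mul_conj', starRingEnd_apply]
  have e1 : ∀ r : ℝ, r ≠ 0 → ((r * ‖g r‖^2 : ℝ):ℂ) = v r * star (v r) / (r:ℂ) := by
    intro r hr
    have hrc : ((r:ℝ):ℂ) ≠ 0 := by exact_mod_cast hr
    push_cast
    rw [← Complex.mul_conj', starRingEnd_apply, hgne r hr, star_div₀, hstar_r]
    field_simp
  have e2 : ∀ r : ℝ, r ≠ 0 → ((a r : ℝ):ℂ)
      = (v r + (r:ℂ) * deriv v r) * star (v r + (r:ℂ) * deriv v r) / (r:ℂ) := by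
    intro r hr
    have hrc : ((r:ℝ):ℂ) ≠ 0 := by exact_mod_cast hr
    simp only [hadef]
    push_cast
    rw [← Complex.mul_conj', starRingEnd_apply, hgne r hr]
    simp only [star_add, star_div₀, star_mul, hstar_r]
    field_simp
  have key : ∀ r : ℝ, r ≠ 0 →
      Gd r = Q r + (ξ:ℂ)^2 * ((Bre r : ℝ):ℂ) - Cc r + ((a r : ℝ):ℂ) := by
    intro r hr
    have hrc : ((r:ℝ):ℂ) ≠ 0 := by exact_mod_cast hr
    simp only [hGddef, hQdef, hCcdef]
    rw [e1 r hr, e2 r hr, e3 r]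
    simp only [star_add, star_mul, hstar_r]
    field_simp
    ring
  have hQeq : ∀ r ∈ Set.Ioo (0:ℝ) 1, Q r = Complex.I * ξ * ((U r * ‖v r‖^2 * r : ℝ):ℂ) := by
    intro r hr
    have hr0 : r ≠ 0 := ne_of_gt hr.1
    have hrc : ((r:ℝ):ℂ) ≠ 0 := by exact_mod_cast hr0
    have hFr := heq r hr
    have e4 : ((U r * ‖v r‖^2 * r : ℝ):ℂ) = (U r : ℂ) * (v r * star (v r)) * (r:ℂ) := by
      push_cast
      rw [← Complex.mul_conj', starRingEnd_apply]
    simp only [hQdef, hCcdef]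
    rw [← hFr, e1 r hr0, e3 r, e4]
    field_simp
    ring
  -- integrability of the pieces
  have hai : IntervalIntegrable (fun r => ((a r:ℝ):ℂ)) volume 0 1 :=
    (Complex.continuous_ofReal.comp hacont).intervalIntegrable 0 1
  have hBi : IntervalIntegrable (fun r => (ξ:ℂ)^2 * ((Bre r:ℝ):ℂ)) volume 0 1 :=
    (continuous_const.mul (Complex.continuous_ofReal.comp hBrecont)).intervalIntegrable 0 1
  have hCi : IntervalIntegrable Cc volume 0 1 := hCccont.intervalIntegrable 0 1
  have hQi : IntervalIntegrable Q volume 0 1 := hQcont.intervalIntegrable 0 1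
  have key0 : Gd 0 = Q 0 + (ξ:ℂ)^2 * ((Bre 0 : ℝ):ℂ) - Cc 0 + ((a 0 : ℝ):ℂ) := by
    simp [hGddef, hQdef, hCcdef, hBredef, hadef, hv0]
  have hsplit : (∫ r in (0:ℝ)..1, Gd r)
      = (∫ r in (0:ℝ)..1, Q r) + (ξ:ℂ)^2 * (∫ r in (0:ℝ)..1, ((Bre r:ℝ):ℂ))
        - (∫ r in (0:ℝ)..1, Cc r) + (∫ r in (0:ℝ)..1, ((a r:ℝ):ℂ)) := by
    have h1 : (∫ r in (0:ℝ)..1, Gd r)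
        = ∫ r in (0:ℝ)..1, (Q r + (ξ:ℂ)^2 * ((Bre r:ℝ):ℂ) - Cc r + ((a r:ℝ):ℂ)) :=
      intervalIntegral.integral_congr (fun r _ => by
        rcases eq_or_ne r 0 with rfl | h
        · exact key0
        · exact key r h)
    rw [h1, intervalIntegral.integral_add ((hQi.add hBi).sub hCi) hai,
      intervalIntegral.integral_sub (hQi.add hBi) hCi,
      intervalIntegral.integral_add hQi hBi,
      intervalIntegral.integral_const_mul]
  have hIB : (∫ r in (0:ℝ)..1, ((Bre r:ℝ):ℂ)) = ((∫ r in (0:ℝ)..1, Bre r : ℝ):ℂ) :=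
    intervalIntegral.integral_ofReal
  have hIa : (∫ r in (0:ℝ)..1, ((a r:ℝ):ℂ)) = ((∫ r in (0:ℝ)..1, a r : ℝ):ℂ) :=
    intervalIntegral.integral_ofReal
  -- the first goal integrand equals a
  have hIA : (∫ r in (0:ℝ)..1, ‖deriv (fun s : ℝ => (s : ℂ) * v s) r‖ ^ 2 / r)
      = ∫ r in (0:ℝ)..1, a r := by
    apply intervalIntegral.integral_congr
    intro r _
    rcases eq_or_ne r 0 with rfl | h
    · simp [hw 0, hv0, hadef]
    · have hrc : ((r:ℝ):ℂ) ≠ 0 := by exact_mod_cast h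
      have hz : v r + (r:ℂ) * deriv v r = (r:ℂ) * (g r + deriv v r) := by
        rw [hgne r h]; field_simp
      show ‖deriv (fun s : ℝ => (s:ℂ) * v s) r‖ ^ 2 / r = a r
      rw [hw r, hz]
      simp only [hadef, norm_mul, Complex.norm_real, Real.norm_eq_abs, mul_pow, sq_abs]
      field_simp
  -- main complex identity
  have hmain : (∫ r in (0:ℝ)..1, Cc r)
      = (∫ r in (0:ℝ)..1, Q r) + (ξ:ℂ)^2 * ((∫ r in (0:ℝ)..1, Bre r : ℝ):ℂ)
        + ((∫ r in (0:ℝ)..1, a r : ℝ):ℂ) - (((2 - α) * ‖v 1‖^2 : ℝ):ℂ) := by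
    have h := hFTC
    rw [hsplit, hG0, hG1, sub_zero, hIB, hIa] at h
    linear_combination -h
  -- value of the Q integral
  have hae1 : ∀ᵐ x : ℝ, x ∈ Set.uIoc (0:ℝ) 1 → x ∈ Set.Ioo (0:ℝ) 1 := by
    have h1 : ∀ᵐ x : ℝ, x ≠ (1:ℝ) := by
      rw [ae_iff]
      simp [Real.volume_singleton]
    filter_upwards [h1] with x hx hxm
    rw [Set.uIoc_of_le zero_le_one] at hxm
    exact ⟨hxm.1, lt_of_le_of_ne hxm.2 hx⟩
  have hQval : (∫ r in (0:ℝ)..1, Q r)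
      = Complex.I * ξ * ((∫ r in (0:ℝ)..1, U r * ‖v r‖^2 * r : ℝ):ℂ) := by
    by_cases hξ : ξ = 0
    · subst hξ
      have : (∫ r in (0:ℝ)..1, Q r) = ∫ r in (0:ℝ)..1, (0:ℂ) := by
        apply intervalIntegral.integral_congr_ae
        filter_upwards [hae1] with x hx hxm
        rw [hQeq x (hx hxm)]
        simp
      simp [this]
    · set Xc : ℝ → ℝ := fun r => (Q r).im / ξ with hXcdef
      have hXccont : Continuous Xc := (Complex.continuous_im.comp hQcont).div_const ξ
      have hXc : ∀ r ∈ Set.Ioo (0:ℝ) 1, U r * ‖v r‖^2 * r = Xc r := by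
        intro r hr
        have him : (Q r).im = ξ * (U r * ‖v r‖^2 * r) := by
          rw [hQeq r hr]
          simp only [Complex.mul_im, Complex.mul_re, Complex.I_re, Complex.I_im,
            Complex.ofReal_re, Complex.ofReal_im]
          ring
        simp only [hXcdef, him]
        field_simp
      have hIX : (∫ r in (0:ℝ)..1, U r * ‖v r‖^2 * r) = ∫ r in (0:ℝ)..1, Xc r := by
        apply intervalIntegral.integral_congr_ae
        filter_upwards [hae1] with x hx hxm
        exact hXc x (hx hxm)
      have hQ2 : (∫ r in (0:ℝ)..1, Q r)
          = ∫ r in (0:ℝ)..1, (Complex.I * ξ * ((Xc r : ℝ):ℂ)) := by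
        apply intervalIntegral.integral_congr_ae
        filter_upwards [hae1] with x hx hxm
        rw [hQeq x (hx hxm), hXc x (hx hxm)]
      rw [hQ2, intervalIntegral.integral_const_mul, intervalIntegral.integral_ofReal, hIX]
  -- finish
  have hre := congrArg Complex.re hmain
  have him := congrArg Complex.im hmain
  rw [hQval] at hre him
  simp only [Complex.add_re, Complex.sub_re, Complex.add_im, Complex.sub_im,
    Complex.ofReal_re, Complex.ofReal_im, Complex.mul_re, Complex.mul_im,
    Complex.I_re, Complex.I_im, ← Complex.ofReal_pow] at hre him
  norm_num at hre him
  have hCg : (∫ r in (0:ℝ)..1, F r * (starRingEnd ℂ) (v r) * (r:ℂ))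
      = ∫ r in (0:ℝ)..1, Cc r := by
    simp only [starRingEnd_apply, hCcdef]
  constructor
  · rw [hCg, hIA, hre, hBredef]
    ring
  · rw [hCg, him]
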